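/- Let P be a C¹ function near w₀ ∈ ℝ^d with values in the N×N complex matrices, let ν ∈ ℝ^d, let M be an N×N complex matrix, and let c > 0, C ≥ 0 be constants such that for all u ∈ ℂ^N: Re⟨M ∂_ν P(w₀)u, u⟩ ≥ c‖u‖² − C‖P(w₀)u‖² and Im⟨M P(w₀)u, u⟩ ≥ −C‖P(w₀)u‖². Then the map from Ker P(w₀) to ℂ^N / Ran P(w₀) sending u to the class of ∂_ν P(w₀)u is a bijection; in particular P is of principal type at w₀. -/

import Mathlib

open Matrix

set_option maxHeartbeats 1000000

/-- The directional derivative `∂_ν P(w₀)` of a matrix-valued function, taken entrywise. -/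
noncomputable def dirDeriv {d N : ℕ} (P : EuclideanSpace ℝ (Fin d) → Matrix (Fin N) (Fin N) ℂ)
    (w₀ ν : EuclideanSpace ℝ (Fin d)) : Matrix (Fin N) (Fin N) ℂ :=
  fun i j => deriv (fun t : ℝ => P (w₀ + t • ν) i j) 0

/-- `P` is of principal type at `w₀` if for some direction `ν` the map
`Ker P(w₀) ∋ u ↦ ∂_ν P(w₀) u ∈ ℂ^N / Ran P(w₀)` is a bijection. -/
noncomputable def IsPrincipalTypeAt {d N : ℕ}
    (P : EuclideanSpace ℝ (Fin d) → Matrix (Fin N) (Fin N) ℂ)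
    (w₀ : EuclideanSpace ℝ (Fin d)) : Prop :=
  ∃ ν : EuclideanSpace ℝ (Fin d),
    Function.Bijective
      ((LinearMap.range (Matrix.toEuclideanLin (P w₀))).mkQ ∘ₗ
        Matrix.toEuclideanLin (dirDeriv P w₀ ν) ∘ₗ
        (LinearMap.ker (Matrix.toEuclideanLin (P w₀))).subtype)

/-- **(Part of Proposition 4.7.)** If `P` is `C¹` near `w₀` and there are a matrix `M` and
constants `c > 0`, `C ≥ 0` with `Re⟨M ∂_ν P(w₀)u, u⟩ ≥ c‖u‖² − C‖P(w₀)u‖²` and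
`Im⟨M P(w₀)u, u⟩ ≥ −C‖P(w₀)u‖²` for all `u ∈ ℂ^N`, then the map
`Ker P(w₀) ∋ u ↦ ∂_ν P(w₀) u ∈ ℂ^N / Ran P(w₀)` is a bijection; in particular `P` is of
principal type at `w₀`. Here `⟨a, b⟩ = ⟪b, a⟫_ℂ` is linear in the first argument. -/
theorem quasiSymmetrizable_principalType {d N : ℕ}
    (P : EuclideanSpace ℝ (Fin d) → Matrix (Fin N) (Fin N) ℂ)
    (w₀ ν : EuclideanSpace ℝ (Fin d)) (M : Matrix (Fin N) (Fin N) ℂ)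
    (hP : ∀ i j, ContDiffAt ℝ 1 (fun w => P w i j) w₀)
    (c C : ℝ) (hc : 0 < c) (hC : 0 ≤ C)
    (h1 : ∀ u : EuclideanSpace ℂ (Fin N),
      c * ‖u‖ ^ 2 - C * ‖Matrix.toEuclideanLin (P w₀) u‖ ^ 2 ≤
        (inner ℂ u (Matrix.toEuclideanLin (M * dirDeriv P w₀ ν) u) : ℂ).re)
    (h2 : ∀ u : EuclideanSpace ℂ (Fin N),
      -(C * ‖Matrix.toEuclideanLin (P w₀) u‖ ^ 2) ≤
        (inner ℂ u (Matrix.toEuclideanLin (M * P w₀) u) : ℂ).im) :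
    Function.Bijective
      ((LinearMap.range (Matrix.toEuclideanLin (P w₀))).mkQ ∘ₗ
        Matrix.toEuclideanLin (dirDeriv P w₀ ν) ∘ₗ
        (LinearMap.ker (Matrix.toEuclideanLin (P w₀))).subtype) ∧
    IsPrincipalTypeAt P w₀ := by
  classical
  set A := Matrix.toEuclideanLin (P w₀) with hA
  set D := Matrix.toEuclideanLin (dirDeriv P w₀ ν) with hD
  have hmul : ∀ (Q : Matrix (Fin N) (Fin N) ℂ) (x : EuclideanSpace ℂ (Fin N)),
      Matrix.toEuclideanLin (M * Q) x = Matrix.toEuclideanLin M (Matrix.toEuclideanLin Q x) := by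
    intro Q x
    simp [Matrix.toEuclideanLin_apply, Matrix.mulVec_mulVec]
  set L := (LinearMap.range A).mkQ ∘ₗ D ∘ₗ (LinearMap.ker A).subtype with hL
  have hinj : Function.Injective L := by
    rw [← LinearMap.ker_eq_bot, LinearMap.ker_eq_bot']
    intro x hx
    have hDx : D (x : EuclideanSpace ℂ (Fin N)) ∈ LinearMap.range A := by
      have h0 : (LinearMap.range A).mkQ (D (x : EuclideanSpace ℂ (Fin N))) = 0 := hx
      rwa [Submodule.mkQ_apply, Submodule.Quotient.mk_eq_zero] at h0
    obtain ⟨v, hv⟩ := hDx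
    set u : EuclideanSpace ℂ (Fin N) := (x : EuclideanSpace ℂ (Fin N)) with hu
    have hAx : A u = 0 := x.2
    set X : ℂ := inner ℂ u (Matrix.toEuclideanLin M (D u)) with hX
    set Y : ℂ := inner ℂ v (Matrix.toEuclideanLin M (A v)) with hY
    have h1' : c * ‖u‖ ^ 2 ≤ X.re := by
      have := h1 u
      rw [hmul] at this
      simpa [← hA, ← hD, ← hX, hAx] using this
    have key : ∀ s : ℝ, 0 ≤ s * X.re + s ^ 2 * (Y.im + C * ‖A v‖ ^ 2) := by
      intro s
      set w : EuclideanSpace ℂ (Fin N) := u + ((s : ℂ) * Complex.I) • v with hw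
      have hAw : A w = ((s : ℂ) * Complex.I) • A v := by
        simp [hw, map_add, _root_.map_smul, hAx]
      have hnorm : ‖A w‖ ^ 2 = s ^ 2 * ‖A v‖ ^ 2 := by
        rw [hAw, norm_smul]
        simp [mul_pow, sq_abs]
      have hinner : (inner ℂ w (Matrix.toEuclideanLin (M * P w₀) w) : ℂ)
          = ((s : ℂ) * Complex.I) * X + ((s : ℂ) ^ 2) * Y := by
        rw [hmul, ← hA, hAw, _root_.map_smul]
        rw [hw, inner_add_left, inner_smul_left, inner_smul_right, inner_smul_right]
        have huA : (inner ℂ u (Matrix.toEuclideanLin M (A v)) : ℂ) = X := by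
          rw [hX, hv]
        rw [huA, ← hY]
        have hconj : (starRingEnd ℂ) ((s : ℂ) * Complex.I) = -((s : ℂ) * Complex.I) := by
          simp [Complex.conj_ofReal]
        rw [hconj]
        calc ((s : ℂ) * Complex.I) * X + -((s : ℂ) * Complex.I) * (((s : ℂ) * Complex.I) * Y)
            = ((s : ℂ) * Complex.I) * X + (-(Complex.I * Complex.I)) * (((s : ℂ) ^ 2) * Y) := by
              ring
          _ = ((s : ℂ) * Complex.I) * X + ((s : ℂ) ^ 2) * Y := by
              rw [Complex.I_mul_I]; ring
      have := h2 w
      rw [hinner, hnorm] at this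
      have him : (((s : ℂ) * Complex.I) * X + ((s : ℂ) ^ 2) * Y).im
          = s * X.re + s ^ 2 * Y.im := by
        simp [Complex.add_im, Complex.mul_im, Complex.mul_re, ← Complex.ofReal_pow]
      rw [him] at this
      nlinarith [this]
    have hXle : X.re ≤ 0 := by
      by_contra h
      push_neg at h
      set K : ℝ := Y.im + C * ‖A v‖ ^ 2 with hK
      rcases le_or_gt K 0 with hK0 | hK0
      · have := key (-1)
        nlinarith
      · have hs := key (-(X.re / (2 * K)))
        have hKne : K ≠ 0 := ne_of_gt hK0
        have e : -(X.re / (2 * K)) * X.re + (-(X.re / (2 * K))) ^ 2 * K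
            = -(X.re ^ 2 / (4 * K)) := by
          field_simp
          ring
        rw [e] at hs
        have h4K : (0 : ℝ) < 4 * K := by linarith
        have hle : X.re ^ 2 / (4 * K) ≤ 0 := by linarith
        have hsq : X.re ^ 2 ≤ 0 := by
          have := (div_le_iff₀ h4K).mp hle
          simpa using this
        nlinarith
    have hu0 : u = 0 := by
      have : c * ‖u‖ ^ 2 ≤ 0 := le_trans h1' hXle
      have hn2 : ‖u‖ ^ 2 ≤ 0 := by nlinarith [sq_nonneg ‖u‖]
      have hsq : ‖u‖ ^ 2 = 0 := le_antisymm hn2 (sq_nonneg _)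
      have hn : ‖u‖ = 0 := pow_eq_zero_iff two_ne_zero |>.mp hsq
      exact norm_eq_zero.mp hn
    exact Subtype.ext hu0
  have hdim : Module.finrank ℂ (LinearMap.ker A)
      = Module.finrank ℂ (EuclideanSpace ℂ (Fin N) ⧸ LinearMap.range A) := by
    have e1 := Submodule.finrank_quotient_add_finrank (LinearMap.range A)
    have e2 := LinearMap.finrank_range_add_finrank_ker A
    omega
  have hbij : Function.Bijective L :=
    ⟨hinj, (LinearMap.injective_iff_surjective_of_finrank_eq_finrank hdim).mp hinj⟩
  exact ⟨hbij, ⟨ν, hbij⟩⟩
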